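/- Let N ≥ 2 be an integer and let p, μ be real numbers with 1 < p < N and 0 ≤ μ < μ̄ := ((N−p)/p)^p. Define Γ_μ(γ) = γ^{p−1}((p−1)γ − (N−p)) + μ for γ ≥ 0. Then the equation Γ_μ(γ) = 0 has exactly two solutions γ₁ and γ₂ in [0,∞), and they satisfy 0 ≤ γ₁ < (N−p)/p < γ₂ ≤ (N−p)/(p−1). -/

import Mathlib

open Filter Topology Set

theorem stmt_15
    (N : ℕ) (hN : 2 ≤ N) (p μ : ℝ)
    (hp1 : 1 < p) (hpN : p < N)
    (hμ0 : 0 ≤ μ) (hμ : μ < (((N : ℝ) - p) / p) ^ p) :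
    ∃ γ₁ γ₂ : ℝ,
      0 ≤ γ₁ ∧ γ₁ < ((N : ℝ) - p) / p ∧
      ((N : ℝ) - p) / p < γ₂ ∧ γ₂ ≤ ((N : ℝ) - p) / (p - 1) ∧
      γ₁ ^ (p - 1) * ((p - 1) * γ₁ - ((N : ℝ) - p)) + μ = 0 ∧
      γ₂ ^ (p - 1) * ((p - 1) * γ₂ - ((N : ℝ) - p)) + μ = 0 ∧
      ∀ γ : ℝ, 0 ≤ γ →
        γ ^ (p - 1) * ((p - 1) * γ - ((N : ℝ) - p)) + μ = 0 →
        γ = γ₁ ∨ γ = γ₂ := by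
  have hp0 : (0:ℝ) < p := lt_trans one_pos hp1
  have hpm1 : (0:ℝ) < p - 1 := by linarith
  set A : ℝ := (N:ℝ) - p with hA
  have hA0 : 0 < A := by rw [hA]; linarith
  set c : ℝ := A / p with hc
  set d : ℝ := A / (p - 1) with hd
  have hc0 : 0 < c := div_pos hA0 hp0
  have hcd : c < d := div_lt_div_of_pos_left hA0 hpm1 (by linarith)
  have hd0 : 0 < d := lt_trans hc0 hcd
  set g : ℝ → ℝ := fun x => (p - 1) * x ^ p - A * x ^ (p - 1) with hg
  -- x^(p-1)*x = x^p for x ≥ 0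
  have hx_pow : ∀ x : ℝ, 0 ≤ x → x ^ (p - 1) * x = x ^ p := by
    intro x hx
    rcases eq_or_lt_of_le hx with h | h
    · rw [← h, Real.zero_rpow hp0.ne', Real.zero_rpow (by linarith : p - 1 ≠ 0), mul_zero]
    · rw [← Real.rpow_add_one h.ne', sub_add_cancel]
  have heq : ∀ x : ℝ, 0 ≤ x → x ^ (p - 1) * ((p - 1) * x - A) = g x := by
    intro x hx
    rw [hg]
    simp only
    rw [← hx_pow x hx]
    ring
  have hcont : Continuous g := by
    apply Continuous.sub
    · apply continuous_const.mul
      rw [continuous_iff_continuousAt]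
      intro x
      exact Real.continuousAt_rpow_const x p (Or.inr hp0.le)
    · apply continuous_const.mul
      rw [continuous_iff_continuousAt]
      intro x
      exact Real.continuousAt_rpow_const x (p - 1) (Or.inr hpm1.le)
  have hderiv : ∀ x : ℝ, 0 < x →
      HasDerivAt g ((p - 1) * x ^ (p - 2) * (p * x - A)) x := by
    intro x hx
    have h1 : HasDerivAt (fun y : ℝ => y ^ p) (p * x ^ (p - 1)) x :=
      Real.hasDerivAt_rpow_const (Or.inl hx.ne')
    have h2 : HasDerivAt (fun y : ℝ => y ^ (p - 1)) ((p - 1) * x ^ (p - 1 - 1)) x :=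
      Real.hasDerivAt_rpow_const (Or.inl hx.ne')
    have h := (h1.const_mul (p - 1)).sub (h2.const_mul A)
    have e1 : x ^ (p - 1) = x ^ (p - 2) * x := by
      rw [← Real.rpow_add_one hx.ne']; congr 1; ring
    have e2 : p - 1 - 1 = p - 2 := by ring
    refine HasDerivAt.congr_deriv h ?_
    rw [e1, e2]
    ring
  have hanti : StrictAntiOn g (Icc 0 c) := by
    apply strictAntiOn_of_deriv_neg (convex_Icc 0 c) hcont.continuousOn
    intro x hx
    rw [interior_Icc] at hx
    rw [(hderiv x hx.1).deriv]
    have hxp : x * p < A := (lt_div_iff₀ hp0).mp hx.2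
    have hpow : 0 < x ^ (p - 2) := Real.rpow_pos_of_pos hx.1 _
    apply mul_neg_of_pos_of_neg (mul_pos hpm1 hpow)
    linarith
  have hmono : StrictMonoOn g (Ici c) := by
    apply strictMonoOn_of_deriv_pos (convex_Ici c) hcont.continuousOn
    intro x hx
    rw [interior_Ici] at hx
    have hx0 : 0 < x := lt_trans hc0 hx
    rw [(hderiv x hx0).deriv]
    have hxp : A < x * p := (div_lt_iff₀ hp0).mp hx
    exact mul_pos (mul_pos hpm1 (Real.rpow_pos_of_pos hx0 _)) (by linarith)
  have hg0 : g 0 = 0 := by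
    rw [hg]
    simp [Real.zero_rpow hp0.ne', Real.zero_rpow (by linarith : p - 1 ≠ 0)]
  have hAc : A = c * p := by rw [hc]; field_simp
  have hgc : g c = -(c ^ p) := by
    rw [← heq c hc0.le]
    have : (p - 1) * c - A = -c := by rw [hAc]; ring
    rw [this]
    rw [← hx_pow c hc0.le]
    ring
  have hgd : g d = 0 := by
    rw [← heq d hd0.le]
    have : (p - 1) * d - A = 0 := by rw [hd]; field_simp; ring
    rw [this, mul_zero]
  have hμbar : μ < c ^ p := hμ
  -- IVT on [0, c]
  have h1 : -μ ∈ Icc (g c) (g 0) := by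
    rw [hg0, hgc]
    constructor <;> linarith
  obtain ⟨γ₁, hγ₁mem, hγ₁⟩ := intermediate_value_Icc' hc0.le hcont.continuousOn h1
  have hγ₁lt : γ₁ < c := by
    rcases lt_or_eq_of_le hγ₁mem.2 with h | h
    · exact h
    · exfalso
      rw [h, hgc] at hγ₁
      linarith
  -- IVT on [c, d]
  have h2 : -μ ∈ Icc (g c) (g d) := by
    rw [hgd, hgc]
    constructor <;> linarith
  obtain ⟨γ₂, hγ₂mem, hγ₂⟩ := intermediate_value_Icc hcd.le hcont.continuousOn h2
  have hγ₂gt : c < γ₂ := by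
    rcases lt_or_eq_of_le hγ₂mem.1 with h | h
    · exact h
    · exfalso
      rw [← h, hgc] at hγ₂
      linarith
  have hγ₁0 : 0 ≤ γ₁ := hγ₁mem.1
  refine ⟨γ₁, γ₂, hγ₁0, hγ₁lt, hγ₂gt, hγ₂mem.2, ?_, ?_, ?_⟩
  · rw [heq γ₁ hγ₁0, hγ₁]; ring
  · rw [heq γ₂ (le_trans hc0.le hγ₂mem.1), hγ₂]; ring
  · intro γ hγ hΓ
    rw [heq γ hγ] at hΓ
    have hgγ : g γ = -μ := by linarith
    rcases le_total γ c with h | h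
    · left
      exact hanti.injOn ⟨hγ, h⟩ ⟨hγ₁mem.1, hγ₁mem.2⟩ (by rw [hgγ, hγ₁])
    · right
      exact hmono.injOn h hγ₂mem.1 (by rw [hgγ, hγ₂])
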